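/- Let E be a finite-dimensional real inner product space, let p ≥ 1 be an integer, let a > 0, and let g, u, v ∈ E. Then (1/((p+1)·2^{p−1}))·‖v − u‖^{p+1} + a·⟨g, v − u⟩ ≥ −(p/(p+1))·2^{(p−1)/p}·(a·‖g‖)^{(p+1)/p}. -/

import Mathlib

open scoped RealInnerProductSpace in
theorem inner_power_young {E : Type*} [NormedAddCommGroup E] [InnerProductSpace ℝ E]
    [FiniteDimensional ℝ E]
    (p : ℕ) (hp : 1 ≤ p) (a : ℝ) (ha : 0 < a) (g u v : E) :
    1 / (((p : ℝ) + 1) * 2 ^ (p - 1)) * ‖v - u‖ ^ (p + 1) + a * ⟪g, v - u⟫ ≥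
      -((p : ℝ) / ((p : ℝ) + 1)) * 2 ^ (((p : ℝ) - 1) / p) *
        (a * ‖g‖) ^ (((p : ℝ) + 1) / p) := by
  have hp1 : (1:ℝ) ≤ (p:ℝ) := by exact_mod_cast hp
  have hp0 : (0:ℝ) < (p:ℝ) := by linarith
  set t : ℝ := ‖v - u‖ with ht
  set b : ℝ := a * ‖g‖ with hb
  have ht0 : 0 ≤ t := norm_nonneg _
  have hb0 : 0 ≤ b := by positivity
  set q : ℝ := (p:ℝ) + 1 with hq
  have hq0 : 0 < q := by positivity
  have hq1 : 1 < q := by rw [hq]; linarith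
  have hconj : q.HolderConjugate (q / p) := by
    rw [Real.holderConjugate_iff]
    constructor
    · exact hq1
    · rw [hq]; field_simp; ring
  set L : ℝ := (2:ℝ) ^ (((p:ℝ) - 1) / q) with hL
  have hL0 : 0 < L := Real.rpow_pos_of_pos (by norm_num) _
  have hyoung := Real.young_inequality_of_nonneg (div_nonneg ht0 hL0.le)
      (mul_nonneg hL0.le hb0) hconj
  have hLq : L ^ q = (2:ℝ) ^ ((p:ℝ) - 1) := by
    rw [hL, ← Real.rpow_mul (by norm_num)]
    congr 1
    field_simp
  have hLqp : L ^ (q / p) = (2:ℝ) ^ (((p:ℝ) - 1) / p) := by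
    rw [hL, ← Real.rpow_mul (by norm_num)]
    congr 1
    field_simp
  have h2p : (0:ℝ) < (2:ℝ) ^ ((p:ℝ) - 1) := Real.rpow_pos_of_pos (by norm_num) _
  have key : b * t ≤ 1 / (q * (2:ℝ) ^ ((p:ℝ) - 1)) * t ^ q
      + ((p:ℝ) / q) * (2:ℝ) ^ (((p:ℝ) - 1) / p) * b ^ (q / p) := by
    have e1 : t / L * (L * b) = b * t := by field_simp
    have e2 : (t / L) ^ q = t ^ q / (2:ℝ) ^ ((p:ℝ) - 1) := by
      rw [Real.div_rpow ht0 hL0.le, hLq]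
    have e3 : (L * b) ^ (q / p) = (2:ℝ) ^ (((p:ℝ) - 1) / p) * b ^ (q / p) := by
      rw [Real.mul_rpow hL0.le hb0, hLqp]
    rw [e1, e2, e3] at hyoung
    calc b * t ≤ t ^ q / (2:ℝ) ^ ((p:ℝ) - 1) / q
        + (2:ℝ) ^ (((p:ℝ) - 1) / p) * b ^ (q / p) / (q / (p:ℝ)) := hyoung
      _ = _ := by field_simp
  -- rewrite nat powers as rpow
  have hpow1 : t ^ (p + 1) = t ^ q := by
    rw [hq, ← Real.rpow_natCast t (p + 1)]
    push_cast
    ring_nf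
  have hpow2 : (2:ℝ) ^ (p - 1) = (2:ℝ) ^ ((p:ℝ) - 1) := by
    rw [← Real.rpow_natCast (2:ℝ) (p - 1)]
    congr 1
    rw [Nat.cast_sub hp]
    norm_num
  have hinner : a * ⟪g, v - u⟫ ≥ -(b * t) := by
    have h1 : -(‖g‖ * t) ≤ ⟪g, v - u⟫ := by
      have := abs_real_inner_le_norm g (v - u)
      have := neg_abs_le (⟪g, v - u⟫ : ℝ)
      linarith
    have := mul_le_mul_of_nonneg_left h1 ha.le
    rw [hb]
    nlinarith
  rw [hpow1, hpow2]
  have := key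
  nlinarith [key, hinner]
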